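/- Let n = p q^b with p, q distinct primes and b ≥ 2, and let s be an integer with 1 < s ≤ b. Let x ∈ Z_n have additive order q and let y ∈ Z_n have additive order q^s. Then the degree of x in the power graph P(Z_n) is strictly greater than the degree of y. -/

import Mathlib

/-- The power graph of `ZMod n`: distinct `x`, `y` are adjacent iff one is a
positive multiple (i.e. a positive "power" in additive notation) of the other. -/
def powerGraph (n : ℕ) : SimpleGraph (ZMod n) :=
  SimpleGraph.fromRel (fun x y => ∃ m : ℕ, 0 < m ∧ y = m • x)

private lemma nat_div_dvd_div {a b n : ℕ} (hab : a ∣ b) (hbn : b ∣ n) : n / b ∣ n / a := by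
  obtain ⟨k, rfl⟩ := hab
  have ha : a ∣ n := dvd_trans (dvd_mul_right a k) hbn
  rw [Nat.div_div_eq_div_mul n a k |>.symm]
  exact Nat.div_dvd_of_dvd ((Nat.dvd_div_iff_mul_dvd ha).mpr hbn)

/-- In `ZMod n` (`n ≠ 0`), `w` is a positive natural multiple of `x` iff
the additive order of `w` divides that of `x`. -/
private lemma multiple_iff {n : ℕ} [NeZero n] (x w : ZMod n) :
    (∃ m : ℕ, 0 < m ∧ w = m • x) ↔ addOrderOf w ∣ addOrderOf x := by
  have hn : n ≠ 0 := NeZero.ne n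
  have hxcast : ((x.val : ℕ) : ZMod n) = x := by
    simp [ZMod.natCast_val, ZMod.cast_id]
  have hwcast : ((w.val : ℕ) : ZMod n) = w := by
    simp [ZMod.natCast_val, ZMod.cast_id]
  have hox : addOrderOf x = n / n.gcd x.val := by
    conv_lhs => rw [← hxcast]
    exact ZMod.addOrderOf_coe _ hn
  have how : addOrderOf w = n / n.gcd w.val := by
    conv_lhs => rw [← hwcast]
    exact ZMod.addOrderOf_coe _ hn
  constructor
  · rintro ⟨m, -, rfl⟩
    refine addOrderOf_dvd_of_nsmul_eq_zero ?_
    rw [smul_comm, addOrderOf_nsmul_eq_zero, smul_zero]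
  · intro hdvd
    -- from the divisibility of orders, deduce `gcd n x.val ∣ w.val`
    have hg1 : n.gcd x.val ∣ n := Nat.gcd_dvd_left _ _
    have hg2 : n.gcd w.val ∣ n := Nat.gcd_dvd_left _ _
    have hgg : n.gcd x.val ∣ n.gcd w.val := by
      have h1 : n / (n / n.gcd x.val) ∣ n / (n / n.gcd w.val) := by
        refine nat_div_dvd_div ?_ (Nat.div_dvd_of_dvd hg1)
        rw [← hox, ← how]; exact hdvd
      rwa [Nat.div_div_self hg1 hn, Nat.div_div_self hg2 hn] at h1
    have hgw : n.gcd x.val ∣ w.val := hgg.trans (Nat.gcd_dvd_right _ _)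
    -- Bézout: `gcd n x.val` is a `ZMod n` multiple of `x`
    set g := n.gcd x.val with hgdef
    have hbez : (g : ℤ) = n * Nat.gcdA n x.val + x.val * Nat.gcdB n x.val :=
      Nat.gcd_eq_gcd_ab n x.val
    have hzg : (g : ZMod n) = x * ((Nat.gcdB n x.val : ℤ) : ZMod n) := by
      have := congrArg (fun z : ℤ => ((z : ℤ) : ZMod n)) hbez
      push_cast at this
      rw [ZMod.natCast_self] at this
      simpa [hxcast] using this
    set c : ZMod n := ((w.val / g : ℕ) : ZMod n) * ((Nat.gcdB n x.val : ℤ) : ZMod n) with hc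
    have hwc : w = c * x := by
      have : ((w.val / g * g : ℕ) : ZMod n) = w := by
        rw [Nat.div_mul_cancel hgw, hwcast]
      rw [← this]
      push_cast
      rw [hzg, hc]; ring
    refine ⟨c.val + n, by have := Nat.pos_of_ne_zero hn; omega, ?_⟩
    rw [nsmul_eq_mul]
    push_cast
    rw [ZMod.natCast_self, ZMod.natCast_val, ZMod.cast_id, add_zero, hwc]

private lemma powerGraph_adj_iff {n : ℕ} [NeZero n] (a b : ZMod n) :
    (powerGraph n).Adj a b ↔
      a ≠ b ∧ (addOrderOf b ∣ addOrderOf a ∨ addOrderOf a ∣ addOrderOf b) := by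
  rw [powerGraph, SimpleGraph.fromRel_adj, multiple_iff, multiple_iff]

/-- Subcase 2.1: for `n = p q^b` with `p ≠ q` primes, `b ≥ 2`, and `1 < s ≤ b`,
an element of order `q` has strictly larger degree in the power graph of `ZMod n`
than an element of order `q^s`. -/
theorem degree_order_q_gt_order_qs (p q b : ℕ) (hp : p.Prime) (hq : q.Prime)
    (hpq : p ≠ q) (hb : 2 ≤ b)
    (n : ℕ) (hn : n = p * q ^ b)
    (s : ℕ) (hs1 : 1 < s) (hs2 : s ≤ b)
    (x y : ZMod n) (hx : addOrderOf x = q) (hy : addOrderOf y = q ^ s) :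
    Nat.card ((powerGraph n).neighborSet y) < Nat.card ((powerGraph n).neighborSet x) := by
  have hn0 : n ≠ 0 := by
    rw [hn]
    exact Nat.mul_ne_zero hp.pos.ne' (pow_ne_zero _ hq.pos.ne')
  haveI : NeZero n := ⟨hn0⟩
  have hq1 : 1 < q := hq.one_lt
  have hp1 : 1 < p := hp.one_lt
  -- basic divisibility facts
  have hqqs : q ∣ q ^ s := dvd_pow_self q (by omega)
  have hqne : q ≠ q ^ s := by
    intro h
    have : q ^ 1 = q ^ s := by simpa using h
    have := Nat.pow_right_injective hq.two_le this
    omega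
  have hcop : Nat.Coprime q p := (Nat.coprime_primes hq hp).mpr (Ne.symm hpq)
  have hnpq : ¬ (p * q ∣ q ^ s) := by
    intro h
    have hpqs : p ∣ q ^ s := (dvd_mul_right p q).trans h
    have := hp.dvd_of_dvd_pow hpqs
    exact hpq ((Nat.prime_dvd_prime_iff_eq hp hq).mp this)
  have hnqs : ¬ (q ^ s ∣ p * q) := by
    intro h
    have hcop' : Nat.Coprime (q ^ s) p := (hcop.pow_left s)
    have : q ^ s ∣ q := (Nat.Coprime.dvd_of_dvd_mul_left hcop' h)
    have : q ^ s ∣ q ^ 1 := by simpa using this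
    have := (Nat.pow_dvd_pow_iff_le_right hq1).mp this
    omega
  -- the witness element of order p*q
  set w : ZMod n := ((q ^ (b - 1) : ℕ) : ZMod n) with hwdef
  have hb1 : b - 1 + 1 = b := by omega
  have hqb : q ^ b = q * q ^ (b - 1) := by
    conv_lhs => rw [← hb1]
    rw [pow_succ]
    ring
  have hbsplit : n = (p * q) * q ^ (b - 1) := by
    rw [hn, hqb]
    ring
  have hgcd : n.gcd (q ^ (b - 1)) = q ^ (b - 1) := by
    rw [hbsplit]
    have := Nat.gcd_mul_right (p * q) 1 (q ^ (b - 1))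
    simpa using this
  have how : addOrderOf w = p * q := by
    rw [hwdef, ZMod.addOrderOf_coe _ hn0, hgcd, hbsplit,
      Nat.mul_div_cancel _ (by positivity)]
  -- distinctness
  have hxy : x ≠ y := fun h =>
    hqne ((hx.symm.trans (congrArg addOrderOf h)).trans hy)
  have hwx : w ≠ x := by
    intro h
    have hpqq : p * q = q := by rw [← how, h, hx]
    have : p = 1 := Nat.eq_of_mul_eq_mul_right hq.pos (by simpa using hpqq)
    omega
  have hwy : w ≠ y := by
    intro h
    have hpqq : p * q = q ^ s := by rw [← how, h, hy]
    exact hnpq (hpqq ▸ dvd_rfl)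
  -- adjacency facts
  have hadj_yx : (powerGraph n).Adj y x := by
    rw [powerGraph_adj_iff]
    exact ⟨hxy.symm, Or.inl (by rw [hx, hy]; exact hqqs)⟩
  have hadj_xy : (powerGraph n).Adj x y := hadj_yx.symm
  have hadj_xw : (powerGraph n).Adj x w := by
    rw [powerGraph_adj_iff]
    exact ⟨Ne.symm hwx, by rw [hx, how]; exact Or.inr (dvd_mul_left q p)⟩
  have hnadj_yw : ¬ (powerGraph n).Adj y w := by
    rw [powerGraph_adj_iff, hy, how]
    rintro ⟨-, h | h⟩
    · exact hnpq h
    · exact hnqs h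
  -- set inclusion
  set S : Set (ZMod n) := (powerGraph n).neighborSet y with hS
  set T : Set (ZMod n) := (powerGraph n).neighborSet x with hT
  have hsub : S \ {x} ⊂ T \ {y} := by
    constructor
    · rintro z ⟨hz, hzx⟩
      simp only [Set.mem_singleton_iff] at hzx
      have hadj : (powerGraph n).Adj y z := hz
      rw [powerGraph_adj_iff] at hadj
      obtain ⟨hyz, hcase⟩ := hadj
      have hzy : z ≠ y := Ne.symm hyz
      have hzadj : (powerGraph n).Adj x z := by
        rw [powerGraph_adj_iff]
        refine ⟨Ne.symm hzx, ?_⟩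
        rw [hx]
        rw [hy] at hcase
        rcases hcase with h | h
        · by_cases hqz : q ∣ addOrderOf z
          · exact Or.inr hqz
          · left
            have hcz : Nat.Coprime (addOrderOf z) q :=
              Nat.Coprime.symm (hq.coprime_iff_not_dvd.mpr hqz)
            have : addOrderOf z = 1 := (hcz.pow_right s).eq_one_of_dvd h
            simp [this]
        · exact Or.inr (hqqs.trans h)
      exact ⟨hzadj, by simpa using hzy⟩
    · intro hcon
      have hwmem : w ∈ T \ {y} := ⟨hadj_xw, by simpa using hwy⟩
      have := hcon hwmem
      exact hnadj_yw this.1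
  -- cardinality computation
  have hSfin : S.Finite := Set.toFinite _
  have hTfin : T.Finite := Set.toFinite _
  have hxS : x ∈ S := hadj_yx
  have hyT : y ∈ T := hadj_xy
  show Nat.card ↑S < Nat.card ↑T
  rw [Nat.card_coe_set_eq, Nat.card_coe_set_eq,
    ← Set.ncard_diff_singleton_add_one hxS hSfin,
    ← Set.ncard_diff_singleton_add_one hyT hTfin]
  have := Set.ncard_lt_ncard hsub (hTfin.diff (t := {y}))
  omega
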